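/- arXiv:2604.03921 — 2 statements merged into one kernel-verified Lean document; each statement's English description precedes it below -/
import Mathlib

section
/- Consider a directed graph on nodes {0,1,…,m} with nonnegative weights, where for each unit i ∈ {1,…,m}, Σ_{j∈N_i} w_{ij} + w_{i0} = 1 (the balance condition). Suppose every node i ∈ {1,…,m} is reachable from node 0 along directed edges, and y ∈ ℝ^m satisfies y_i = Σ_{j∈N_i, j≠0} w_{ij} y_j + w_{i0}·c for all i, where c ∈ ℝ. Then y_i = c for all i ∈ {1,…,m}. -/
open Finset

/-- Node `i` (a unit) is reachable from the source node `0`: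
there is a unit `k` receiving directly from the source and a directed path of
positive-weight unit-to-unit edges from `k` to `i` (an edge `j → i` exists when
`w i j > 0`, i.e. `i` receives information from `j`). -/
def ReachableFromSource {m : ℕ} (w : Fin m → Fin m → ℝ) (w0 : Fin m → ℝ)
    (i : Fin m) : Prop :=
  ∃ k, 0 < w0 k ∧ Relation.ReflTransGen (fun j i' => 0 < w i' j) k i

lemma aux_max_principle (m : ℕ)
    (w : Fin m → Fin m → ℝ) (w0 : Fin m → ℝ)
    (hw : ∀ i j, 0 ≤ w i j) (hw0 : ∀ i, 0 ≤ w0 i)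
    (hbal : ∀ i, (∑ j, w i j) + w0 i = 1)
    (hreach : ∀ i, ReachableFromSource w w0 i)
    (e : Fin m → ℝ) (he : ∀ i, e i = ∑ j, w i j * e j) :
    ∀ i, e i ≤ 0 := by
  intro i
  have hne : (Finset.univ : Finset (Fin m)).Nonempty := ⟨i, Finset.mem_univ i⟩
  obtain ⟨i₀, -, hmax⟩ := Finset.exists_max_image Finset.univ e hne
  set M := e i₀ with hM
  have hmax' : ∀ j, e j ≤ M := fun j => hmax j (Finset.mem_univ j)
  by_contra hpos'
  push_neg at hpos'
  have hMpos : 0 < M := lt_of_lt_of_le hpos' (hmax' i)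
  -- key claim
  have key : ∀ a, e a = M → w0 a = 0 ∧ ∀ j, 0 < w a j → e j = M := by
    intro a ha
    have hterm : ∀ j ∈ Finset.univ, 0 ≤ w a j * (M - e j) := by
      intro j _
      exact mul_nonneg (hw a j) (sub_nonneg.2 (hmax' j))
    have hsum : ∑ j, w a j * (M - e j) = -(M * w0 a) := by
      have h1 : ∑ j, w a j * (M - e j) = (∑ j, w a j) * M - ∑ j, w a j * e j := by
        rw [Finset.sum_mul]
        rw [← Finset.sum_sub_distrib]
        congr 1; ext j; ring
      rw [h1, ← he a, ha]
      have h2 : (∑ j, w a j) = 1 - w0 a := by linarith [hbal a]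
      rw [h2]; ring
    have hsle : ∑ j, w a j * (M - e j) ≤ 0 := by
      rw [hsum]
      have : 0 ≤ M * w0 a := mul_nonneg hMpos.le (hw0 a)
      linarith
    have hsge : 0 ≤ ∑ j, w a j * (M - e j) := Finset.sum_nonneg hterm
    have hs0 : ∑ j, w a j * (M - e j) = 0 := le_antisymm hsle hsge
    have hw0a : w0 a = 0 := by
      have : M * w0 a = 0 := by rw [hs0] at hsum; linarith
      rcases mul_eq_zero.1 this with h | h
      · exact absurd h hMpos.ne'
      · exact h
    refine ⟨hw0a, fun j hj => ?_⟩
    have := (Finset.sum_eq_zero_iff_of_nonneg hterm).1 hs0 j (Finset.mem_univ j)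
    rcases mul_eq_zero.1 this with h | h
    · exact absurd h hj.ne'
    · linarith
  -- propagate along path backwards
  have path : ∀ k a, Relation.ReflTransGen (fun j i' => 0 < w i' j) k a →
      e a = M → e k = M := by
    intro k a h ha
    induction h using Relation.ReflTransGen.head_induction_on with
    | refl => exact ha
    | head hr _ ih => exact (key _ ih).2 _ hr
  obtain ⟨k, hk0, hkpath⟩ := hreach i₀
  have hek : e k = M := path k i₀ hkpath rfl
  have := (key k hek).1
  linarith

theorem consensus_from_balance_and_reachability (m : ℕ)
    (w : Fin m → Fin m → ℝ) (w0 : Fin m → ℝ)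
    (hw : ∀ i j, 0 ≤ w i j) (hw0 : ∀ i, 0 ≤ w0 i)
    (hbal : ∀ i, (∑ j, w i j) + w0 i = 1)
    (hreach : ∀ i, ReachableFromSource w w0 i)
    (y : Fin m → ℝ) (c : ℝ)
    (hfix : ∀ i, y i = (∑ j, w i j * y j) + w0 i * c) :
    ∀ i, y i = c := by
  set e : Fin m → ℝ := fun i => y i - c with hed
  have he : ∀ i, e i = ∑ j, w i j * e j := by
    intro i
    have h1 : ∑ j, w i j * e j = (∑ j, w i j * y j) - (∑ j, w i j) * c := by
      rw [Finset.sum_mul, ← Finset.sum_sub_distrib]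
      congr 1; ext j; simp [hed]; ring
    have h2 : (∑ j, w i j) = 1 - w0 i := by linarith [hbal i]
    simp only [hed]
    rw [h1, h2, hfix i]; ring
  have hne : ∀ i, (fun i => -(e i)) i = ∑ j, w i j * (fun i => -(e i)) j := by
    intro i
    simp only [mul_neg, Finset.sum_neg_distrib, neg_inj]
    exact he i
  have h1 := aux_max_principle m w w0 hw hw0 hbal hreach e he
  have h2 := aux_max_principle m w w0 hw hw0 hbal hreach (fun i => -(e i)) hne
  intro i
  have := h1 i
  have := h2 i
  simp only [hed] at *
  linarith
end

section
/- Let ε : ℝ≥0 → ℝ^n be a C¹ solution of ε̇ = Mε + Dv with v ∈ L²([0,∞), ℝ^m), ε(0) = 0. Suppose there exists a symmetric positive definite P such that for all (ε, v) ≠ 0, εᵀ(PM + MᵀP)ε + 2εᵀPDv + ‖ε‖² - δ²‖v‖² < 0. Then ∫₀^∞ ‖ε(t)‖² dt ≤ δ² ∫₀^∞ ‖v(t)‖² dt. -/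
open Matrix MeasureTheory Set

private lemma hinf_alg {n m : ℕ} (M : Matrix (Fin n) (Fin n) ℝ) (D : Matrix (Fin n) (Fin m) ℝ)
    (P : Matrix (Fin n) (Fin n) ℝ) (hPsym : Pᵀ = P) (e : Fin n → ℝ) (w : Fin m → ℝ) :
    (M.mulVec e + D.mulVec w) ⬝ᵥ P.mulVec e + e ⬝ᵥ P.mulVec (M.mulVec e + D.mulVec w)
      = e ⬝ᵥ (P * M + Mᵀ * P).mulVec e + 2 * (e ⬝ᵥ (P * D).mulVec w) := by
  have h1 : (M.mulVec e) ⬝ᵥ P.mulVec e = e ⬝ᵥ (Mᵀ * P).mulVec e := by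
    rw [← Matrix.mulVec_mulVec, Matrix.dotProduct_mulVec e, Matrix.vecMul_transpose]
  have h2 : (D.mulVec w) ⬝ᵥ P.mulVec e = e ⬝ᵥ (P * D).mulVec w := by
    rw [← Matrix.mulVec_mulVec, Matrix.dotProduct_mulVec e, ← Matrix.mulVec_transpose, hPsym,
      dotProduct_comm]
  simp only [add_dotProduct, Matrix.mulVec_add, dotProduct_add, h1, h2,
    Matrix.mulVec_mulVec, Matrix.add_mulVec]
  ring

private lemma hinf_normsq {k : ℕ} (x : EuclideanSpace ℝ (Fin k)) :
    ‖x‖ ^ 2 = (x : Fin k → ℝ) ⬝ᵥ (x : Fin k → ℝ) := by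
  rw [EuclideanSpace.norm_eq, Real.sq_sqrt (by positivity)]
  simp [dotProduct, sq]

theorem hinf_l2_gain (n m : ℕ)
    (M : Matrix (Fin n) (Fin n) ℝ) (D : Matrix (Fin n) (Fin m) ℝ) (δ : ℝ)
    (hδ : 0 < δ)
    (ε : ℝ → EuclideanSpace ℝ (Fin n)) (v : ℝ → EuclideanSpace ℝ (Fin m))
    (hode : ∀ t, 0 ≤ t →
      HasDerivAt ε (WithLp.toLp 2 (M.mulVec (ε t) + D.mulVec (v t)) : EuclideanSpace ℝ (Fin n)) t)
    (hinit : ε 0 = 0)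
    (hv : IntegrableOn (fun t => ‖v t‖ ^ 2) (Ioi 0))
    (P : Matrix (Fin n) (Fin n) ℝ) (hP : P.PosDef)
    (hdissip : ∀ (e : Fin n → ℝ) (w : Fin m → ℝ), ¬(e = 0 ∧ w = 0) →
      e ⬝ᵥ (P * M + Mᵀ * P).mulVec e + 2 * (e ⬝ᵥ (P * D).mulVec w)
        + e ⬝ᵥ e - δ ^ 2 * (w ⬝ᵥ w) < 0) :
    ∫ t in Ioi (0 : ℝ), ‖ε t‖ ^ 2 ≤ δ ^ 2 * ∫ t in Ioi (0 : ℝ), ‖v t‖ ^ 2 := by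
  have hPsym : Pᵀ = P := hP.1
  set V : ℝ → ℝ := fun t => (ε t : Fin n → ℝ) ⬝ᵥ P.mulVec (ε t) with hVdef
  set V' : ℝ → ℝ := fun t =>
    (ε t : Fin n → ℝ) ⬝ᵥ (P * M + Mᵀ * P).mulVec (ε t)
      + 2 * ((ε t : Fin n → ℝ) ⬝ᵥ (P * D).mulVec (v t)) with hV'def
  -- derivative of V
  have hVderiv : ∀ t, 0 ≤ t → HasDerivAt V (V' t) t := by
    intro t ht
    have hd := hode t ht
    set e' : Fin n → ℝ :=
      fun i => (WithLp.toLp 2 (M.mulVec (ε t) + D.mulVec (v t)) : EuclideanSpace ℝ (Fin n)) i with he'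
    have hproj : ∀ i : Fin n, HasDerivAt (fun s => ε s i) (e' i) t := by
      intro i
      have h := (EuclideanSpace.proj (𝕜 := ℝ) i).hasFDerivAt.comp_hasDerivAt t hd
      exact h
    have key : HasDerivAt V
        (∑ i, (e' i * (∑ j, P i j * ε t j) + ε t i * (∑ j, P i j * e' j))) t := by
      have h2 : HasDerivAt (fun s => ∑ i, ε s i * (∑ j, P i j * ε s j))
          (∑ i, (e' i * (∑ j, P i j * ε t j) + ε t i * (∑ j, P i j * e' j))) t := by
        apply HasDerivAt.fun_sum
        intro i _
        exact (hproj i).mul (HasDerivAt.fun_sum fun j _ => (hproj j).const_mul (P i j))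
      exact h2
    convert key using 1
    have halg := hinf_alg M D P hPsym (ε t) (v t)
    simp only [hV'def]
    rw [← halg]
    simp only [dotProduct, Matrix.mulVec, Finset.sum_add_distrib]
    rfl
  -- the dissipation bound
  have hVle : ∀ t, 0 ≤ t → V' t ≤ δ ^ 2 * ‖v t‖ ^ 2 - ‖ε t‖ ^ 2 := by
    intro t ht
    by_cases h : (ε t : Fin n → ℝ) = 0 ∧ (v t : Fin m → ℝ) = 0
    · have h1 : (ε t : Fin n → ℝ) = 0 := h.1
      have h2 : (v t : Fin m → ℝ) = 0 := h.2
      have hn1 : ‖ε t‖ = 0 := by rw [norm_eq_zero]; simpa using h1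
      have hn2 : ‖v t‖ = 0 := by rw [norm_eq_zero]; simpa using h2
      rw [hn1, hn2]
      simp only [hV'def]
      rw [h1, h2]
      simp
    · have := hdissip (ε t) (v t) h
      rw [hinf_normsq (ε t), hinf_normsq (v t)]
      simp only [hV'def]
      linarith
  -- V is nonneg, V 0 = 0
  have hV0 : V 0 = 0 := by
    have h0 : (ε 0 : Fin n → ℝ) = 0 := by simp [hinit]
    simp [hVdef, h0]
  have hVnonneg : ∀ t, 0 ≤ V t := by
    intro t
    by_cases h : (ε t : Fin n → ℝ) = 0
    · simp [hVdef, h]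
    · have := hP.dotProduct_mulVec_pos h
      simp only [star_trivial] at this
      exact this.le
  -- continuity
  have hcont : ContinuousOn ε (Ici 0) := fun t ht =>
    (hode t ht).continuousAt.continuousWithinAt
  have hεsq_cont : ContinuousOn (fun t => ‖ε t‖ ^ 2) (Ici 0) :=
    (hcont.norm.pow 2)
  have hVcont : ContinuousOn V (Ici 0) := by
    have houter : Continuous (fun x : Fin n → ℝ => x ⬝ᵥ P.mulVec x) :=
      continuous_id.dotProduct (continuous_const.matrix_mulVec continuous_id)
    exact houter.comp_continuousOn ((PiLp.continuous_ofLp (p := 2) (β := fun _ : Fin n => ℝ)).comp_continuousOn hcont)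
  -- nonnegativity of RHS integral
  have hvInt_nonneg : 0 ≤ ∫ t in Ioi (0:ℝ), ‖v t‖ ^ 2 :=
    setIntegral_nonneg measurableSet_Ioi fun t _ => by positivity
  -- main finite-horizon bound
  have hbound : ∀ T : ℝ, 0 ≤ T →
      ∫ t in (0:ℝ)..T, ‖ε t‖ ^ 2 ≤ δ ^ 2 * ∫ t in Ioi (0:ℝ), ‖v t‖ ^ 2 := by
    intro T hT
    have hIccIci : Icc (0:ℝ) T ⊆ Ici 0 := Icc_subset_Ici_self
    have hvIcc : IntegrableOn (fun t => ‖v t‖ ^ 2) (Icc 0 T) := by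
      rw [integrableOn_Icc_iff_integrableOn_Ioc]
      exact hv.mono_set Ioc_subset_Ioi_self
    have hεIcc : IntegrableOn (fun t => ‖ε t‖ ^ 2) (Icc 0 T) :=
      (hεsq_cont.mono hIccIci).integrableOn_compact isCompact_Icc
    have hgInt : IntegrableOn (fun t => δ ^ 2 * ‖v t‖ ^ 2 - ‖ε t‖ ^ 2) (Icc 0 T) :=
      (hvIcc.const_mul _).sub hεIcc
    have hftc : V T - V 0 ≤ ∫ t in (0:ℝ)..T, (δ ^ 2 * ‖v t‖ ^ 2 - ‖ε t‖ ^ 2) := by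
      apply intervalIntegral.sub_le_integral_of_hasDeriv_right_of_le hT
        (hVcont.mono hIccIci)
        (fun x hx => ((hVderiv x hx.1.le).hasDerivWithinAt))
        hgInt
        (fun x hx => hVle x hx.1.le)
    have hsplit : ∫ t in (0:ℝ)..T, (δ ^ 2 * ‖v t‖ ^ 2 - ‖ε t‖ ^ 2)
        = δ ^ 2 * (∫ t in (0:ℝ)..T, ‖v t‖ ^ 2) - ∫ t in (0:ℝ)..T, ‖ε t‖ ^ 2 := by
      have h1 : IntervalIntegrable (fun t => ‖v t‖ ^ 2) volume 0 T := by
        rw [intervalIntegrable_iff_integrableOn_Icc_of_le hT]; exact hvIcc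
      have h2 : IntervalIntegrable (fun t => ‖ε t‖ ^ 2) volume 0 T := by
        rw [intervalIntegrable_iff_integrableOn_Icc_of_le hT]; exact hεIcc
      rw [intervalIntegral.integral_sub (h1.const_mul _) h2,
        intervalIntegral.integral_const_mul]
    have hvT : ∫ t in (0:ℝ)..T, ‖v t‖ ^ 2 ≤ ∫ t in Ioi (0:ℝ), ‖v t‖ ^ 2 := by
      rw [intervalIntegral.integral_of_le hT]
      apply setIntegral_mono_set hv
      · exact Filter.Eventually.of_forall fun t => by positivity
      · exact HasSubset.Subset.eventuallyLE Ioc_subset_Ioi_self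
    have h0 : 0 ≤ V T - V 0 := by rw [hV0]; simpa using hVnonneg T
    nlinarith [hδ.le, sq_nonneg δ]
  -- pass to the limit
  by_cases hεint : IntegrableOn (fun t => ‖ε t‖ ^ 2) (Ioi 0)
  · have htend := intervalIntegral_tendsto_integral_Ioi 0 hεint Filter.tendsto_id
    refine le_of_tendsto htend ?_
    filter_upwards [Filter.eventually_ge_atTop (0:ℝ)] with T hT
    exact hbound T hT
  · rw [integral_undef hεint]
    positivity
end
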